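/- Let i, j, k be integers with i ≠ 0 and k ≠ 0, and let G be the group presented by generators x, y, t and relators xy = yx, t xⁱ t⁻¹ = xʲyᵏ. Then G has a subgroup H of index 2 which admits a surjective group homomorphism onto the free group F₂ of rank 2. -/

import Mathlib

/-- Generators `x, y, t`. -/
def x9 : FreeGroup (Fin 3) := FreeGroup.of 0
def y9 : FreeGroup (Fin 3) := FreeGroup.of 1
def t9 : FreeGroup (Fin 3) := FreeGroup.of 2

/-- Relators `xy = yx`, `t xⁱ t⁻¹ = xʲ yᵏ`. -/
def rels9 (i j k : ℤ) : Set (FreeGroup (Fin 3)) :=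
  {x9 * y9 * (y9 * x9)⁻¹, t9 * x9 ^ i * t9⁻¹ * (x9 ^ j * y9 ^ k)⁻¹}

namespace SLaux

abbrev F2 := FreeGroup (Fin 2)

def a : F2 := FreeGroup.of 0
def b : F2 := FreeGroup.of 1

def σ : MulAut (F2 × F2) := (MulEquiv.prodComm : (F2 × F2) ≃* (F2 × F2))

lemma σ_apply (x : F2 × F2) : σ x = x.swap := rfl

lemma σσ : σ * σ = 1 := by
  ext x <;> simp [MulAut.mul_apply, σ_apply]

def φ : Multiplicative (ZMod 2) →* MulAut (F2 × F2) :=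
  MonoidHom.mk' (fun e => σ ^ (Multiplicative.toAdd e).val) (by
    intro e₁ e₂
    have h2 : σ ^ 2 = 1 := by rw [pow_two]; exact σσ
    show σ ^ (Multiplicative.toAdd e₁ + Multiplicative.toAdd e₂).val = _
    rw [ZMod.val_add, ← pow_eq_pow_mod _ h2, pow_add])

abbrev W := SemidirectProduct (F2 × F2) (Multiplicative (ZMod 2)) φ

def τ : Multiplicative (ZMod 2) := Multiplicative.ofAdd 1

lemma φτ (x : F2 × F2) : φ τ x = x.swap := by
  show (σ ^ (Multiplicative.toAdd τ).val) x = x.swap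
  rw [show (Multiplicative.toAdd τ).val = 1 from rfl, pow_one]
  rfl

lemma ττ : τ * τ = 1 := by decide

lemma prod_zpow (u v : F2) (m : ℤ) : ((u, v) : F2 × F2) ^ m = (u ^ m, v ^ m) :=
  Prod.ext (map_zpow (MonoidHom.fst F2 F2) (u, v) m) (map_zpow (MonoidHom.snd F2 F2) (u, v) m)

lemma a_comm (s t : ℤ) : a ^ s * a ^ t = a ^ t * a ^ s := by
  rw [← zpow_add, ← zpow_add, add_comm]

/-- images of the generators -/
def wx (p : ℤ) : W := SemidirectProduct.inl (1, a ^ p)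
def wy (n q : ℤ) : W := SemidirectProduct.inl (a ^ n, a ^ q)
def wt : W := SemidirectProduct.inl (1, b) * SemidirectProduct.inr τ

lemma wt_conj (z : F2 × F2) :
    wt * SemidirectProduct.inl z * wt⁻¹
      = SemidirectProduct.inl (((1 : F2), b) * z.swap * ((1 : F2), b)⁻¹) := by
  have aut : (SemidirectProduct.inl (φ τ z) : W)
      = SemidirectProduct.inr τ * SemidirectProduct.inl z * (SemidirectProduct.inr τ)⁻¹ := by
    rw [SemidirectProduct.inl_aut, map_inv]
  rw [map_mul, map_mul, map_inv, ← φτ z, aut, wt]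
  group

lemma wt_sq : wt * wt = SemidirectProduct.inl (b, b) := by
  have h : (SemidirectProduct.inr τ : W) * SemidirectProduct.inl (1, b) =
      SemidirectProduct.inl (φ τ (1, b)) * SemidirectProduct.inr τ := by
    rw [SemidirectProduct.inl_aut, map_inv]; group
  calc wt * wt
      = SemidirectProduct.inl (1, b) *
        (SemidirectProduct.inr τ * SemidirectProduct.inl (1, b)) *
        SemidirectProduct.inr τ := by rw [wt]; group
    _ = SemidirectProduct.inl (1, b) *
        (SemidirectProduct.inl (φ τ (1, b)) * SemidirectProduct.inr τ) *
        SemidirectProduct.inr τ := by rw [h]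
    _ = SemidirectProduct.inl (((1 : F2), b) * (φ τ (1, b))) *
        SemidirectProduct.inr (τ * τ) := by rw [map_mul, map_mul]; group
    _ = SemidirectProduct.inl (b, b) := by
        rw [φτ, ττ, map_one, mul_one]
        congr 1

lemma wx_zpow (p m : ℤ) : wx p ^ m = SemidirectProduct.inl (1, a ^ (p * m)) := by
  rw [wx, ← map_zpow, prod_zpow, one_zpow, ← zpow_mul]

lemma wy_zpow (n q m : ℤ) :
    wy n q ^ m = SemidirectProduct.inl (a ^ (n * m), a ^ (q * m)) := by
  rw [wy, ← map_zpow, prod_zpow, ← zpow_mul, ← zpow_mul]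

def gens (n p q : ℤ) : Fin 3 → W
  | 0 => wx p
  | 1 => wy n q
  | 2 => wt

lemma lift_rels (i j k n p q : ℤ) (h1 : p * i = n * k) (h2 : p * j + q * k = 0) :
    ∀ r ∈ rels9 i j k, FreeGroup.lift (gens n p q) r = 1 := by
  intro r hr
  simp only [rels9, Set.mem_insert_iff, Set.mem_singleton_iff] at hr
  rcases hr with rfl | rfl
  · simp only [x9, y9, map_mul, map_inv, FreeGroup.lift_apply_of]
    rw [mul_inv_eq_one]
    show wx p * wy n q = wy n q * wx p
    rw [wx, wy, ← map_mul, ← map_mul]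
    congr 1
    exact Prod.ext (by simp) (a_comm p q)
  · simp only [x9, y9, t9, map_mul, map_inv, map_zpow, FreeGroup.lift_apply_of]
    rw [mul_inv_eq_one]
    show wt * wx p ^ i * wt⁻¹ = wx p ^ j * wy n q ^ k
    rw [wx_zpow, wx_zpow, wy_zpow, wt_conj, ← map_mul]
    congr 1
    refine Prod.ext ?_ ?_
    · simpa using h1.symm ▸ rfl
    · simp [← zpow_add, h2]

/-- the partial projection to the first free factor, on the kernel of `rightHom ∘ Ψ`. -/
def kerHom {G : Type*} [Group G] (Ψ : G →* W) :
    (MonoidHom.ker (SemidirectProduct.rightHom.comp Ψ)) →* F2 where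
  toFun h := (Ψ (h : G)).left.1
  map_one' := by simp
  map_mul' h₁ h₂ := by
    have hr : (Ψ (h₁ : G)).right = 1 := MonoidHom.mem_ker.mp h₁.2
    show (Ψ ((h₁ : G) * (h₂ : G))).left.1 = _
    rw [map_mul, SemidirectProduct.mul_left, hr, map_one, MulAut.one_apply, Prod.fst_mul]

lemma kerHom_apply {G : Type*} [Group G] (Ψ : G →* W)
    (h : MonoidHom.ker (SemidirectProduct.rightHom.comp Ψ)) :
    kerHom Ψ h = (Ψ (h : G)).left.1 := rfl

end SLaux

open SLaux in
/-- The second part of Proposition 4.1: the single-self-loop tubular group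
`⟨x, y, t | [x,y], t xⁱ t⁻¹ = xʲyᵏ⟩` with `k ≠ 0` has an index-2 subgroup surjecting the
free group `F₂`; in particular it is large. -/
theorem self_loop_large (i j k : ℤ) (hi : i ≠ 0) (hk : k ≠ 0) :
    ∃ H : Subgroup (PresentedGroup (rels9 i j k)), H.index = 2 ∧
      ∃ f : H →* FreeGroup (Fin 2), Function.Surjective f := by
  classical
  set e : ℕ := Int.gcd i (Int.gcd j k) with he_def
  have he : (e : ℤ) ≠ 0 := by
    simp only [he_def]
    exact_mod_cast fun h => hi (Int.gcd_eq_zero_iff.mp (by exact_mod_cast h)).1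
  have hei : (e : ℤ) ∣ i := Int.gcd_dvd_left i (Int.gcd j k)
  have hejk : (e : ℤ) ∣ (Int.gcd j k : ℤ) := Int.gcd_dvd_right i (Int.gcd j k)
  have hej : (e : ℤ) ∣ j := hejk.trans (Int.gcd_dvd_left j k)
  have hek : (e : ℤ) ∣ k := hejk.trans (Int.gcd_dvd_right j k)
  have hi' : (e : ℤ) * (i / e) = i := Int.mul_ediv_cancel' hei
  have hj' : (e : ℤ) * (j / e) = j := Int.mul_ediv_cancel' hej
  have hk' : (e : ℤ) * (k / e) = k := Int.mul_ediv_cancel' hek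
  have h1 : (k / (e:ℤ)) * i = (i / (e:ℤ)) * k := by
    apply mul_left_cancel₀ he
    linear_combination i * hk' - k * hi'
  have h2 : (k / (e:ℤ)) * j + (-(j / (e:ℤ))) * k = 0 := by
    apply mul_left_cancel₀ he
    linear_combination j * hk' - k * hj'
  set Φ : PresentedGroup (rels9 i j k) →* W :=
    PresentedGroup.toGroup (lift_rels i j k (i / e) (k / e) (-(j / e)) h1 h2) with hΦdef
  set ρ : PresentedGroup (rels9 i j k) →* Multiplicative (ZMod 2) :=
    SemidirectProduct.rightHom.comp Φ with hρdef
  have hΦ0 : Φ (PresentedGroup.of 0) = wx (k / e) := PresentedGroup.toGroup.of _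
  have hΦ1 : Φ (PresentedGroup.of 1) = wy (i / e) (-(j / e)) := PresentedGroup.toGroup.of _
  have hΦ2 : Φ (PresentedGroup.of 2) = wt := PresentedGroup.toGroup.of _
  have hρ0 : ρ (PresentedGroup.of 0) = 1 := by
    simp [hρdef, hΦ0, wx]
  have hρ1 : ρ (PresentedGroup.of 1) = 1 := by
    simp [hρdef, hΦ1, wy]
  have hρ2 : ρ (PresentedGroup.of 2) = τ := by
    simp [hρdef, hΦ2, wt]
  refine ⟨ρ.ker, ?_, ?_⟩
  · -- index 2
    have hsurj : Function.Surjective ρ := by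
      intro w
      have hw : ∀ v : Multiplicative (ZMod 2), v = 1 ∨ v = τ := by decide
      rcases hw w with rfl | rfl
      · exact ⟨1, map_one ρ⟩
      · exact ⟨PresentedGroup.of 2, hρ2⟩
    rw [Subgroup.index_ker, MonoidHom.range_eq_top.2 hsurj, Subgroup.card_top,
      Nat.card_congr (Multiplicative.toAdd (α := ZMod 2)), Nat.card_zmod]
  · -- the surjection onto F₂
    refine ⟨kerHom Φ, ?_⟩
    -- the four basic elements of the kernel
    have memy : PresentedGroup.of 1 ∈ ρ.ker := MonoidHom.mem_ker.mpr hρ1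
    have memX : (PresentedGroup.of 2 * PresentedGroup.of 0 * (PresentedGroup.of 2)⁻¹ :
        PresentedGroup (rels9 i j k)) ∈ ρ.ker := by
      rw [MonoidHom.mem_ker, map_mul, map_mul, map_inv, hρ0, hρ2]
      group
    have memY : (PresentedGroup.of 2 * PresentedGroup.of 1 * (PresentedGroup.of 2)⁻¹ :
        PresentedGroup (rels9 i j k)) ∈ ρ.ker := by
      rw [MonoidHom.mem_ker, map_mul, map_mul, map_inv, hρ1, hρ2]
      group
    have mems : (PresentedGroup.of 2 * PresentedGroup.of 2 :
        PresentedGroup (rels9 i j k)) ∈ ρ.ker := by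
      rw [MonoidHom.mem_ker, map_mul, hρ2, ττ]
    -- values of the homomorphism on these elements
    have vy : kerHom Φ ⟨_, memy⟩ = a ^ (i / (e:ℤ)) := by
      rw [kerHom_apply]
      simp [hΦ1, wy]
    have vX : kerHom Φ ⟨_, memX⟩ = a ^ (k / (e:ℤ)) := by
      rw [kerHom_apply, map_mul, map_mul, map_inv, hΦ0, hΦ2, wx, wt_conj]
      simp
    have vY : kerHom Φ ⟨_, memY⟩ = a ^ (-(j / (e:ℤ))) := by
      rw [kerHom_apply, map_mul, map_mul, map_inv, hΦ1, hΦ2, wy, wt_conj]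
      simp
    have vs : kerHom Φ ⟨_, mems⟩ = b := by
      rw [kerHom_apply, map_mul, hΦ2, wt_sq]
      simp
    -- Bezout coefficients
    obtain ⟨α, β, γ, hbez⟩ : ∃ α β γ : ℤ,
        (i / (e:ℤ)) * α + (k / (e:ℤ)) * β + (-(j / (e:ℤ))) * γ = 1 := by
      have e1 : ((e:ℕ) : ℤ) = i * Int.gcdA i (Int.gcd j k) +
          (Int.gcd j k : ℤ) * Int.gcdB i (Int.gcd j k) := by
        rw [he_def]; exact Int.gcd_eq_gcd_ab i (Int.gcd j k)
      have e2 : (Int.gcd j k : ℤ) = j * Int.gcdA j k + k * Int.gcdB j k :=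
        Int.gcd_eq_gcd_ab j k
      refine ⟨Int.gcdA i (Int.gcd j k), Int.gcdB i (Int.gcd j k) * Int.gcdB j k,
        -(Int.gcdB i (Int.gcd j k) * Int.gcdA j k), ?_⟩
      apply mul_left_cancel₀ he
      rw [mul_one]
      linear_combination (Int.gcdA i (Int.gcd j k)) * hi' +
        (Int.gcdB i (Int.gcd j k) * Int.gcdB j k) * hk' +
        (Int.gcdB i (Int.gcd j k) * Int.gcdA j k) * hj' - e1 -
        (Int.gcdB i (Int.gcd j k)) * e2
    -- surjectivity
    have hrange : (kerHom Φ).range = ⊤ := by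
      rw [eq_top_iff, ← FreeGroup.closure_range_of (Fin 2), Subgroup.closure_le]
      rintro _ ⟨m, rfl⟩
      fin_cases m
      · -- the generator a
        refine ⟨⟨_, memy⟩ ^ α * ⟨_, memX⟩ ^ β * ⟨_, memY⟩ ^ γ, ?_⟩
        rw [map_mul, map_mul, map_zpow, map_zpow, map_zpow, vy, vX, vY,
          ← zpow_mul, ← zpow_mul, ← zpow_mul, ← zpow_add, ← zpow_add, hbez, zpow_one]
        rfl
      · -- the generator b
        exact ⟨⟨_, mems⟩, vs⟩
    exact MonoidHom.range_eq_top.mp hrange
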